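/- If P, Q, n are odd integers with n ≡ 5 (mod 6) and Q ≡ 1 (mod 4), then U_n(P,Q) is not a perfect square. -/
import Mathlib


def lucasU (P Q : ℤ) : ℕ → ℤ
  | 0 => 0
  | 1 => 1
  | (n + 2) => P * lucasU P Q (n + 1) - Q * lucasU P Q n

theorem stmt2 (P Q : ℤ) (n : ℕ) (hP : Odd P) (hQ : Odd Q) (hn : Odd n)
    (hn6 : n % 6 = 5) (hQ4 : Q % 4 = 1) :
    ¬ ∃ k : ℤ, lucasU P Q n = k ^ 2 := by
  set f : ℕ → ZMod 4 := fun m => ((lucasU P Q m : ℤ) : ZMod 4) with hf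
  set p : ZMod 4 := ((P : ℤ) : ZMod 4) with hp
  have hq : ((Q : ℤ) : ZMod 4) = 1 := by
    have : Q = 4 * (Q / 4) + 1 := by omega
    rw [this]; push_cast
    simp [show (4 : ZMod 4) = 0 from by decide]
  have hrec : ∀ m, f (m + 2) = p * f (m + 1) - f m := by
    intro m
    simp only [hf, lucasU]
    push_cast [hq]
    ring
  have hp2 : p * p = 1 := by
    obtain ⟨m, hm⟩ := hP
    have : ((4 : ℤ) : ZMod 4) = 0 := by decide
    rw [hp, hm]
    push_cast
    ring_nf
    rw [show ((m : ZMod 4) * 4 = (m : ZMod 4) * ((4:ℤ) : ZMod 4)) from by push_cast; ring,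
      show ((m : ZMod 4)^2 * 4 = (m : ZMod 4)^2 * ((4:ℤ) : ZMod 4)) from by push_cast; ring,
      this]
    ring
  have h0 : f 0 = 0 := by simp [hf, lucasU]
  have h1 : f 1 = 1 := by simp [hf, lucasU]
  have h2 : f 2 = p := by rw [hrec 0, h1, h0]; ring
  have h3 : f 3 = 0 := by rw [hrec 1, h2, h1, hp2]; ring
  have h4 : f 4 = -p := by rw [hrec 2, h3, h2]; ring
  have h5 : f 5 = -1 := by rw [hrec 3, h4, h3]; rw [mul_neg, hp2]; ring
  have h6 : f 6 = 0 := by rw [hrec 4, h5, h4]; ring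
  have h7 : f 7 = 1 := by rw [hrec 5, h6, h5]; ring
  -- periodicity: f (m+6) = f m
  have hper : ∀ m, f (m + 6) = f m ∧ f (m + 7) = f (m + 1) := by
    intro m
    induction m with
    | zero => exact ⟨h6.trans h0.symm, h7.trans h1.symm⟩
    | succ k ih =>
      refine ⟨ih.2, ?_⟩
      have : f (k + 8) = p * f (k + 7) - f (k + 6) := hrec (k + 6)
      rw [show k + 1 + 7 = k + 8 from rfl, this, ih.1, ih.2,
        show k + 1 + 1 = k + 2 from rfl, hrec k]
  have hval : ∀ m, f (6 * m + 5) = -1 := by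
    intro m
    induction m with
    | zero => simpa using h5
    | succ k ih =>
      have : 6 * (k + 1) + 5 = (6 * k + 5) + 6 := by ring
      rw [this, (hper _).1, ih]
  have hn5 : f n = -1 := by
    have : n = 6 * (n / 6) + 5 := by omega
    rw [this]; exact hval _
  rintro ⟨k, hk⟩
  have : ((k ^ 2 : ℤ) : ZMod 4) = -1 := by rw [← hk]; exact hn5
  push_cast at this
  have hsq : ∀ x : ZMod 4, x ^ 2 ≠ -1 := by decide
  exact hsq _ this
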